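/- For every real t with 0 < t < 1/2, one has (1 - t)² · log(1/(1-t)) > t² · log(1/t), where log denotes the natural logarithm. Equivalently, the function f(t) = (1-t)² log(1/(1-t)) − t² log(1/t) is strictly positive on the open interval (0, 1/2). -/

import Mathlib

open Real

private noncomputable def q5 (t : ℝ) : ℝ :=
  t ^ 2 * Real.log t - (1 - t) ^ 2 * Real.log (1 - t)

private noncomputable def q5' (t : ℝ) : ℝ :=
  2 * t * Real.log t + 2 * (1 - t) * Real.log (1 - t) + 1

private lemma q5_cont : Continuous q5 := by
  have h : q5 = fun t => t * (t * Real.log t) - (1 - t) * ((1 - t) * Real.log (1 - t)) := by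
    funext t; unfold q5; ring
  rw [h]
  exact (continuous_id.mul Real.continuous_mul_log).sub
    ((continuous_const.sub continuous_id).mul
      (Real.continuous_mul_log.comp (continuous_const.sub continuous_id)))

private lemma aux_deriv {x : ℝ} (hx : x ≠ 0) :
    HasDerivAt (fun u : ℝ => u ^ 2 * Real.log u) (2 * x * Real.log x + x) x := by
  have : HasDerivAt (fun u : ℝ => u ^ 2 * Real.log u) (↑2 * x ^ (2 - 1) * Real.log x + x ^ 2 * x⁻¹) x :=
    (hasDerivAt_pow 2 x).mul (Real.hasDerivAt_log hx)
  convert this using 1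
  field_simp
  ring

private lemma hasDerivAt_q5 {x : ℝ} (h0 : 0 < x) (h1 : x < 1) :
    HasDerivAt q5 (q5' x) x := by
  have hA := aux_deriv h0.ne'
  have hin : HasDerivAt (fun t : ℝ => 1 - t) (-1) x := by
    simpa using (hasDerivAt_id' x).const_sub (1 : ℝ)
  have hg := aux_deriv (x := 1 - x) (by intro h; exact absurd h (by intro h; linarith [sub_eq_zero.mp h]))
  have hB := hg.comp x hin
  have key : HasDerivAt (fun t : ℝ => t ^ 2 * Real.log t - (1 - t) ^ 2 * Real.log (1 - t))
      (2 * x * log x + x - (2 * (1 - x) * log (1 - x) + (1 - x)) * -1) x := hA.sub hB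
  unfold q5 q5'
  convert key using 1
  ring

private lemma hasDerivAt_q5' {x : ℝ} (h0 : 0 < x) (h1 : x < 1) :
    HasDerivAt q5' (2 * (Real.log x - Real.log (1 - x))) x := by
  have hA : HasDerivAt (fun t : ℝ => 2 * t * Real.log t) (2 * Real.log x + 2) x := by
    have : HasDerivAt (fun t : ℝ => 2 * t * Real.log t) (2 * 1 * Real.log x + 2 * x * x⁻¹) x :=
      ((hasDerivAt_id x).const_mul 2).mul (Real.hasDerivAt_log h0.ne')
    convert this using 1
    field_simp
  have hin : HasDerivAt (fun t : ℝ => 1 - t) (-1) x := by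
    simpa using (hasDerivAt_id' x).const_sub (1 : ℝ)
  have hg : HasDerivAt (fun u : ℝ => 2 * u * Real.log u) (2 * Real.log (1 - x) + 2) (1 - x) := by
    have hne : (1 : ℝ) - x ≠ 0 := by intro h; linarith [sub_eq_zero.mp h]
    have : HasDerivAt (fun u : ℝ => 2 * u * Real.log u) (2 * 1 * Real.log (1 - x) + 2 * (1 - x) * (1 - x)⁻¹) (1 - x) :=
      ((hasDerivAt_id (1 - x)).const_mul 2).mul (Real.hasDerivAt_log hne)
    convert this using 1
    field_simp
  have hB := hg.comp x hin
  have key : HasDerivAt (fun t : ℝ => 2 * t * Real.log t + 2 * (1 - t) * Real.log (1 - t) + 1)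
      (2 * log x + 2 + (2 * log (1 - x) + 2) * -1) x := (hA.add hB).add_const 1
  unfold q5'
  convert key using 1
  ring

private lemma q5_concave : StrictConcaveOn ℝ (Set.Icc (0 : ℝ) (1 / 2)) q5 := by
  apply strictConcaveOn_of_deriv2_neg (convex_Icc _ _) q5_cont.continuousOn
  intro x hx
  rw [interior_Icc] at hx
  obtain ⟨hx0, hx2⟩ := hx
  have hx1 : x < 1 := by linarith
  have hev : deriv q5 =ᶠ[nhds x] q5' := by
    filter_upwards [Ioo_mem_nhds hx0 hx1] with y hy
    exact (hasDerivAt_q5 hy.1 hy.2).deriv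
  have h2 : deriv (deriv q5) x = 2 * (Real.log x - Real.log (1 - x)) := by
    rw [hev.deriv_eq]
    exact (hasDerivAt_q5' hx0 hx1).deriv
  show deriv (deriv q5) x < 0
  rw [h2]
  have : Real.log x < Real.log (1 - x) := Real.log_lt_log hx0 (by linarith)
  linarith

/-- For every `t ∈ (0, 1/2)` one has
`(1 - t)² log (1/(1-t)) > t² log (1/t)` (natural logarithm). -/
theorem stmt_5 (t : ℝ) (ht0 : 0 < t) (ht2 : t < 1 / 2) :
    t ^ 2 * Real.log (1 / t) < (1 - t) ^ 2 * Real.log (1 / (1 - t)) := by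
  have h0 : q5 0 = 0 := by simp [q5]
  have h5 : q5 (1 / 2) = 0 := by norm_num [q5]
  have key : (1 - 2 * t) • q5 0 + (2 * t) • q5 (1 / 2) <
      q5 ((1 - 2 * t) • (0 : ℝ) + (2 * t) • (1 / 2 : ℝ)) :=
    q5_concave.2 (Set.left_mem_Icc.mpr (by norm_num))
      (Set.right_mem_Icc.mpr (by norm_num)) (by norm_num)
      (by linarith) (by linarith) (by ring)
  rw [h0, h5] at key
  have hqt : 0 < q5 t := by
    have : (1 - 2 * t) • (0 : ℝ) + (2 * t) • (1 / 2 : ℝ) = t := by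
      simp [smul_eq_mul]; ring
    rw [this] at key
    simpa using key
  have hq : 0 < t ^ 2 * Real.log t - (1 - t) ^ 2 * Real.log (1 - t) := hqt
  rw [one_div, one_div, Real.log_inv, Real.log_inv]
  nlinarith [hq]
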